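/- For the quasi-conformal coframe, the off-diagonal spatial entries of the leading matrix are L_{ij} = (β₁ − β₂)e^{−2f}φ_{ij} for i ≠ j, and all time–space entries L_{0i}, L_{i0} vanish. In particular, if β₁ = β₂ then L_{ab} is diagonal and equals −e^{−2f}·Δ̃φ·diag(β₁−β₄, β₁+β₄, β₁+β₄, β₁+β₄) at every point. -/

import Mathlib

open scoped BigOperators

noncomputable section

/-- Partial derivative along coordinate `i` on `ℝ³`. -/
def pd (i : Fin 3) (f : (Fin 3 → ℝ) → ℝ) : (Fin 3 → ℝ) → ℝ :=
  fun x => fderiv ℝ f x (Pi.single i 1)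

/-- Partial derivative indexed by a 4-index: zero for the time index `0`. -/
def pd4 (f : (Fin 3 → ℝ) → ℝ) (p : Fin 4) : (Fin 3 → ℝ) → ℝ :=
  if h : p = 0 then 0 else pd (p.pred h) f

/-- Signs of the Minkowski metric `η = diag(1,−1,−1,−1)`. -/
def epsM (a : Fin 4) : ℝ := if a = 0 then 1 else -1

/-- The Minkowski metric `η = diag(1,−1,−1,−1)`. -/
def etaM (a b : Fin 4) : ℝ := if a = b then epsM a else 0

/-- Anholonomity objects `C^a_{mn}` of the quasi-conformal coframe
`ϑ⁰ = e^{−f}dt`, `ϑⁱ = e^{f}dxⁱ`:  `C⁰_{0i} = e^{−f}fᵢ`, `C^i_{ij} = −e^{−f}fⱼ`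
(spatial `i ≠ j`), antisymmetric in the lower pair, all other components zero. -/
def Cob (f : (Fin 3 → ℝ) → ℝ) (a m n : Fin 4) : (Fin 3 → ℝ) → ℝ := fun x =>
  if a = 0 then
    Real.exp (-f x) * ((if m = 0 then pd4 f n x else 0) - (if n = 0 then pd4 f m x else 0))
  else
    Real.exp (-f x) * ((if n = a then pd4 f m x else 0) - (if m = a then pd4 f n x else 0))

/-- The contraction `C_a := C^m_{am}`. -/
def Cone (f : (Fin 3 → ℝ) → ℝ) (a : Fin 4) : (Fin 3 → ℝ) → ℝ :=
  fun x => ∑ m : Fin 4, Cob f m a m x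

/-- The B-objects `B^a_{mn0} := 0`, `B^a_{mnp} := e^{−f} ∂_p C^a_{mn}` for `p = 1,2,3`. -/
def Bob (f : (Fin 3 → ℝ) → ℝ) (a m n p : Fin 4) : (Fin 3 → ℝ) → ℝ :=
  fun x => Real.exp (-f x) * pd4 (Cob f a m n) p x

/-- `⁽¹⁾B_{ab} := B_{abm}{}^m` (indices moved with `η`). -/
def B1 (f : (Fin 3 → ℝ) → ℝ) (a b : Fin 4) : (Fin 3 → ℝ) → ℝ :=
  fun x => epsM a * ∑ m : Fin 4, epsM m * Bob f a b m m x

/-- `⁽²⁾B_{ab} := B^m{}_{mab}`. -/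
def B2 (f : (Fin 3 → ℝ) → ℝ) (a b : Fin 4) : (Fin 3 → ℝ) → ℝ :=
  fun x => ∑ m : Fin 4, Bob f m m a b x

/-- `⁽³⁾B_{ab} := B^m{}_{abm}`. -/
def B3 (f : (Fin 3 → ℝ) → ℝ) (a b : Fin 4) : (Fin 3 → ℝ) → ℝ :=
  fun x => ∑ m : Fin 4, Bob f m a b m x

/-- The scalar B-object `B := η^{ab}⁽¹⁾B_{ab}`. -/
def Bscalar (f : (Fin 3 → ℝ) → ℝ) : (Fin 3 → ℝ) → ℝ :=
  fun x => ∑ a : Fin 4, epsM a * B1 f a a x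

/-- `⁽¹⁾A_{ab} := C_{abm}C^m`. -/
def A1 (f : (Fin 3 → ℝ) → ℝ) (a b : Fin 4) : (Fin 3 → ℝ) → ℝ :=
  fun x => epsM a * ∑ m : Fin 4, epsM m * Cob f a b m x * Cone f m x

/-- `⁽²⁾A_{ab} := C_{mab}C^m`. -/
def A2 (f : (Fin 3 → ℝ) → ℝ) (a b : Fin 4) : (Fin 3 → ℝ) → ℝ :=
  fun x => ∑ m : Fin 4, Cob f m a b x * Cone f m x

/-- `⁽³⁾A_{ab} := C_{amn}C_b{}^{mn}`. -/
def A3 (f : (Fin 3 → ℝ) → ℝ) (a b : Fin 4) : (Fin 3 → ℝ) → ℝ :=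
  fun x => epsM a * epsM b *
    ∑ m : Fin 4, ∑ n : Fin 4, epsM m * epsM n * Cob f a m n x * Cob f b m n x

/-- `⁽⁴⁾A_{ab} := C_{amn}C^m{}_b{}^n`. -/
def A4 (f : (Fin 3 → ℝ) → ℝ) (a b : Fin 4) : (Fin 3 → ℝ) → ℝ :=
  fun x => epsM a * ∑ m : Fin 4, ∑ n : Fin 4, epsM n * Cob f a m n x * Cob f m b n x

/-- `⁽⁵⁾A_{ab} := C_{man}C^n{}_b{}^m`. -/
def A5 (f : (Fin 3 → ℝ) → ℝ) (a b : Fin 4) : (Fin 3 → ℝ) → ℝ :=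
  fun x => ∑ m : Fin 4, ∑ n : Fin 4, Cob f m a n x * Cob f n b m x

/-- `⁽⁶⁾A_{ab} := C_{man}C^m{}_b{}^n`. -/
def A6 (f : (Fin 3 → ℝ) → ℝ) (a b : Fin 4) : (Fin 3 → ℝ) → ℝ :=
  fun x => ∑ m : Fin 4, ∑ n : Fin 4, epsM m * epsM n * Cob f m a n x * Cob f m b n x

/-- `⁽⁷⁾A_{ab} := C_a C_b`. -/
def A7 (f : (Fin 3 → ℝ) → ℝ) (a b : Fin 4) : (Fin 3 → ℝ) → ℝ :=
  fun x => Cone f a x * Cone f b x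

/-- `⁽¹⁾A := η^{ab}⁽¹⁾A_{ab}`. -/
def A1s (f : (Fin 3 → ℝ) → ℝ) : (Fin 3 → ℝ) → ℝ :=
  fun x => ∑ a : Fin 4, epsM a * A1 f a a x

/-- `⁽²⁾A := η^{ab}⁽³⁾A_{ab}`. -/
def A2s (f : (Fin 3 → ℝ) → ℝ) : (Fin 3 → ℝ) → ℝ :=
  fun x => ∑ a : Fin 4, epsM a * A3 f a a x

/-- `⁽³⁾A := η^{ab}⁽⁴⁾A_{ab}`. -/
def A3s (f : (Fin 3 → ℝ) → ℝ) : (Fin 3 → ℝ) → ℝ :=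
  fun x => ∑ a : Fin 4, epsM a * A4 f a a x

/-- `φ_{ij} := f_{ij} − fᵢfⱼ`. -/
def phiM (f : (Fin 3 → ℝ) → ℝ) (i j : Fin 3) : (Fin 3 → ℝ) → ℝ :=
  fun x => pd i (pd j f) x - pd i f x * pd j f x

/-- `Δ̃φ := φ₁₁ + φ₂₂ + φ₃₃`. -/
def tphi (f : (Fin 3 → ℝ) → ℝ) : (Fin 3 → ℝ) → ℝ :=
  fun x => ∑ i : Fin 3, phiM f i i x

/-- The Laplacian `Δf := f₁₁ + f₂₂ + f₃₃`. -/
def lap (f : (Fin 3 → ℝ) → ℝ) : (Fin 3 → ℝ) → ℝ :=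
  fun x => ∑ i : Fin 3, pd i (pd i f) x

/-- `∇²f := f₁² + f₂² + f₃²`. -/
def grad2 (f : (Fin 3 → ℝ) → ℝ) : (Fin 3 → ℝ) → ℝ :=
  fun x => ∑ i : Fin 3, pd i f x ^ 2

/-- The leading (second order) part
`L_{ab} = β₁⁽¹⁾B_{(ab)} + β₂⁽²⁾B_{(ab)} + β₃⁽³⁾B_{ab} + β₄η_{ab}B + β₅⁽¹⁾B_{[ab]} + β₆⁽²⁾B_{[ab]}`. -/
def Lmat (β₁ β₂ β₃ β₄ β₅ β₆ : ℝ) (f : (Fin 3 → ℝ) → ℝ) (a b : Fin 4) :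
    (Fin 3 → ℝ) → ℝ := fun x =>
  β₁ * ((B1 f a b x + B1 f b a x) / 2) + β₂ * ((B2 f a b x + B2 f b a x) / 2) +
  β₃ * B3 f a b x + β₄ * etaM a b * Bscalar f x +
  β₅ * ((B1 f a b x - B1 f b a x) / 2) + β₆ * ((B2 f a b x - B2 f b a x) / 2)

/-- The quadratic part `Q_{ab}`. -/
def Qmat (α₁ α₂ α₃ α₄ α₅ α₆ α₇ α₈ α₉ α₁₀ α₁₁ α₁₂ : ℝ) (f : (Fin 3 → ℝ) → ℝ)
    (a b : Fin 4) : (Fin 3 → ℝ) → ℝ := fun x =>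
  α₁ * ((A1 f a b x + A1 f b a x) / 2) + α₂ * A2 f a b x + α₃ * A3 f a b x +
  α₄ * ((A4 f a b x + A4 f b a x) / 2) + α₅ * A5 f a b x + α₆ * A6 f a b x +
  α₇ * A7 f a b x + α₈ * ((A1 f a b x - A1 f b a x) / 2) +
  α₉ * ((A4 f a b x - A4 f b a x) / 2) +
  etaM a b * (α₁₀ * A1s f x + α₁₁ * A2s f x + α₁₂ * A3s f x)

/-- `diag(β₁−β₄, β₁+β₄, β₁+β₄, β₁+β₄)`. -/
def diagM (β₁ β₄ : ℝ) (a b : Fin 4) : ℝ :=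
  if a = b then (if a = 0 then β₁ - β₄ else β₁ + β₄) else 0

variable {f u v : (Fin 3 → ℝ) → ℝ} {x : Fin 3 → ℝ} {i j q : Fin 3}

lemma pd_contDiff (hf : ContDiff ℝ (⊤ : ℕ∞) f) (i : Fin 3) : ContDiff ℝ (⊤ : ℕ∞) (pd i f) :=
  (hf.fderiv_right (m := ((⊤ : ℕ∞) : WithTop ℕ∞)) (by exact_mod_cast le_refl _)).clm_apply contDiff_const
lemma diff_of (hf : ContDiff ℝ (⊤ : ℕ∞) f) : Differentiable ℝ f :=
  hf.differentiable (by simp)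
lemma pd_const (c : ℝ) (q : Fin 3) (x : Fin 3 → ℝ) : pd q (fun _ => c) x = 0 := by simp [pd]
lemma pd_zero (q : Fin 3) (x : Fin 3 → ℝ) : pd q (0 : (Fin 3 → ℝ) → ℝ) x = 0 := by
  simp [pd, show (0 : (Fin 3 → ℝ) → ℝ) = fun _ => (0:ℝ) from rfl]

lemma key (hf : ContDiff ℝ (⊤ : ℕ∞) f) (hu : Differentiable ℝ u) (hv : Differentiable ℝ v)
    (q : Fin 3) (x : Fin 3 → ℝ) :
    pd q (fun y => Real.exp (-f y) * (u y - v y)) x =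
      Real.exp (-f x) * ((pd q u x - pd q f x * u x) - (pd q v x - pd q f x * v x)) := by
  have hfd : Differentiable ℝ f := diff_of hf
  have h1 : DifferentiableAt ℝ (fun y => Real.exp (-f y)) x :=
    (Real.differentiable_exp.comp (hfd.neg)).differentiableAt
  have h2 : DifferentiableAt ℝ (fun y => u y - v y) x := (hu.sub hv).differentiableAt
  have hexp : fderiv ℝ (fun y => Real.exp (-f y)) x
      = Real.exp (-f x) • fderiv ℝ (fun y => -f y) x := fderiv_exp (hfd.neg x)
  have hneg : fderiv ℝ (fun y => -f y) x = -fderiv ℝ f x := fderiv_neg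
  unfold pd
  rw [fderiv_fun_mul h1 h2, fderiv_fun_sub (hu x) (hv x), hexp, hneg]
  simp
  ring

lemma pd_comm (hf : ContDiff ℝ (⊤ : ℕ∞) f) (i j : Fin 3) (x : Fin 3 → ℝ) :
    pd i (pd j f) x = pd j (pd i f) x := by
  have hfd : Differentiable ℝ f := diff_of hf
  have h2 : DifferentiableAt ℝ (fderiv ℝ f) x :=
    ((hf.fderiv_right (m := ((⊤ : ℕ∞) : WithTop ℕ∞)) (by exact_mod_cast le_refl _)).differentiable
      (by simp)).differentiableAt
  have hsymm := second_derivative_symmetric (f := f) (f' := fderiv ℝ f)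
    (f'' := fderiv ℝ (fderiv ℝ f) x) (fun y => (hfd y).hasFDerivAt) h2.hasFDerivAt
  have hcl : ∀ w : Fin 3 → ℝ, ∀ k : Fin 3, pd k (fun y => fderiv ℝ f y w) x
      = fderiv ℝ (fderiv ℝ f) x (Pi.single k 1) w := by
    intro w k
    unfold pd
    rw [show (fun y => fderiv ℝ f y w) = (fun y => (fderiv ℝ f y) ((fun _ => w) y)) from rfl]
    rw [fderiv_clm_apply h2 (differentiableAt_const w)]
    simp
  rw [show pd i (pd j f) x = fderiv ℝ (fderiv ℝ f) x (Pi.single i 1) (Pi.single j 1) from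
    hcl (Pi.single j 1) i,
    show pd j (pd i f) x = fderiv ℝ (fderiv ℝ f) x (Pi.single j 1) (Pi.single i 1) from
    hcl (Pi.single i 1) j, hsymm]

lemma phiM_symm (hf : ContDiff ℝ (⊤ : ℕ∞) f) (i j : Fin 3) (x : Fin 3 → ℝ) :
    phiM f j i x = phiM f i j x := by
  unfold phiM; rw [pd_comm hf]; ring

lemma pd4_diff (hf : ContDiff ℝ (⊤ : ℕ∞) f) (n : Fin 4) : Differentiable ℝ (pd4 f n) := by
  unfold pd4
  split
  · exact differentiable_const 0
  · exact diff_of (pd_contDiff hf _)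

def phiI (f : (Fin 3 → ℝ) → ℝ) (q : Fin 3) (n : Fin 4) (x : Fin 3 → ℝ) : ℝ :=
  if h : n = 0 then 0 else phiM f q (n.pred h) x

lemma phiI_eq (n : Fin 4) :
    pd q (pd4 f n) x - pd q f x * pd4 f n x = phiI f q n x := by
  unfold pd4 phiI phiM
  split
  · simp [pd_zero]
  · rfl

lemma key' (hf : ContDiff ℝ (⊤ : ℕ∞) f) (c₁ c₂ : Prop) [Decidable c₁] [Decidable c₂]
    (hu : Differentiable ℝ u) (hv : Differentiable ℝ v) (q : Fin 3) (x : Fin 3 → ℝ) :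
    pd q (fun y => Real.exp (-f y) * ((if c₁ then u y else 0) - (if c₂ then v y else 0))) x =
      Real.exp (-f x) * ((if c₁ then pd q u x - pd q f x * u x else 0) -
        (if c₂ then pd q v x - pd q f x * v x else 0)) := by
  have h0 : Differentiable ℝ (fun _ : Fin 3 → ℝ => (0:ℝ)) := differentiable_const 0
  split_ifs with h1 h2 h2
  · exact key hf hu hv q x
  · simpa [pd_const] using key hf hu h0 q x
  · simpa [pd_const] using key hf h0 hv q x
  · simpa [pd_const] using key hf h0 h0 q x

lemma Bob_last_zero (a m n : Fin 4) : Bob f a m n 0 x = 0 := by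
  simp [Bob, pd4]

lemma Bob_eval (hf : ContDiff ℝ (⊤ : ℕ∞) f) (a m n : Fin 4) (q : Fin 3) (x : Fin 3 → ℝ) :
    Bob f a m n q.succ x = Real.exp (-f x) * Real.exp (-f x) *
      (if a = 0 then
        (if m = 0 then phiI f q n x else 0) - (if n = 0 then phiI f q m x else 0)
      else
        (if n = a then phiI f q m x else 0) - (if m = a then phiI f q n x else 0)) := by
  have hs : q.succ ≠ (0 : Fin 4) := Fin.succ_ne_zero q
  unfold Bob pd4
  rw [dif_neg hs, Fin.pred_succ]
  by_cases ha : a = 0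
  · have hC : Cob f a m n = fun y => Real.exp (-f y) *
        ((if m = 0 then pd4 f n y else 0) - (if n = 0 then pd4 f m y else 0)) := by
      funext y; simp [Cob, ha]
    rw [hC, key' hf (m = 0) (n = 0) (pd4_diff hf n) (pd4_diff hf m) q x, if_pos ha]
    simp only [phiI_eq]
    ring
  · have hC : Cob f a m n = fun y => Real.exp (-f y) *
        ((if n = a then pd4 f m y else 0) - (if m = a then pd4 f n y else 0)) := by
      funext y; simp [Cob, ha]
    rw [hC, key' hf (n = a) (m = a) (pd4_diff hf m) (pd4_diff hf n) q x, if_neg ha]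
    simp only [phiI_eq]
    ring

lemma succ0 : (Fin.succ 0 : Fin 4) = 1 := rfl
lemma succ1 : (Fin.succ 1 : Fin 4) = 2 := rfl
lemma succ2 : (Fin.succ 2 : Fin 4) = 3 := rfl

lemma Bob_eval1 (hf : ContDiff ℝ (⊤ : ℕ∞) f) (a m n : Fin 4) (x : Fin 3 → ℝ) :
    Bob f a m n 1 x = Real.exp (-f x) * Real.exp (-f x) *
      (if a = 0 then
        (if m = 0 then phiI f 0 n x else 0) - (if n = 0 then phiI f 0 m x else 0)
      else
        (if n = a then phiI f 0 m x else 0) - (if m = a then phiI f 0 n x else 0)) :=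
  Bob_eval hf a m n 0 x

lemma Bob_eval2 (hf : ContDiff ℝ (⊤ : ℕ∞) f) (a m n : Fin 4) (x : Fin 3 → ℝ) :
    Bob f a m n 2 x = Real.exp (-f x) * Real.exp (-f x) *
      (if a = 0 then
        (if m = 0 then phiI f 1 n x else 0) - (if n = 0 then phiI f 1 m x else 0)
      else
        (if n = a then phiI f 1 m x else 0) - (if m = a then phiI f 1 n x else 0)) :=
  Bob_eval hf a m n 1 x

lemma Bob_eval3 (hf : ContDiff ℝ (⊤ : ℕ∞) f) (a m n : Fin 4) (x : Fin 3 → ℝ) :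
    Bob f a m n 3 x = Real.exp (-f x) * Real.exp (-f x) *
      (if a = 0 then
        (if m = 0 then phiI f 2 n x else 0) - (if n = 0 then phiI f 2 m x else 0)
      else
        (if n = a then phiI f 2 m x else 0) - (if m = a then phiI f 2 n x else 0)) :=
  Bob_eval hf a m n 2 x

lemma phiI0 (q : Fin 3) : phiI f q 0 x = 0 := rfl
lemma phiI1 (q : Fin 3) : phiI f q 1 x = phiM f q 0 x := rfl
lemma phiI2 (q : Fin 3) : phiI f q 2 x = phiM f q 1 x := rfl
lemma phiI3 (q : Fin 3) : phiI f q 3 x = phiM f q 2 x := rfl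


set_option maxHeartbeats 2000000 in
/-- for the quasi-conformal coframe, the off-diagonal spatial entries of the
leading matrix are `L_{ij} = (β₁ − β₂)e^{−2f}φ_{ij}` (`i ≠ j`), all time–space entries
vanish, and if `β₁ = β₂` then `L_{ab}` is diagonal and equals
`−e^{−2f}·Δ̃φ·diag(β₁−β₄, β₁+β₄, β₁+β₄, β₁+β₄)` at every point. -/
theorem leading_matrix_structure (β₁ β₂ β₃ β₄ β₅ β₆ : ℝ)
    (f : (Fin 3 → ℝ) → ℝ) (hf : ContDiff ℝ (⊤ : ℕ∞) f) :
    (∀ (i j : Fin 3), i ≠ j → ∀ x : Fin 3 → ℝ,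
      Lmat β₁ β₂ β₃ β₄ β₅ β₆ f i.succ j.succ x =
        (β₁ - β₂) * Real.exp (-2 * f x) * phiM f i j x) ∧
    (∀ (i : Fin 3) (x : Fin 3 → ℝ),
      Lmat β₁ β₂ β₃ β₄ β₅ β₆ f 0 i.succ x = 0 ∧
      Lmat β₁ β₂ β₃ β₄ β₅ β₆ f i.succ 0 x = 0) ∧
    (β₁ = β₂ → ∀ (a b : Fin 4) (x : Fin 3 → ℝ),
      Lmat β₁ β₂ β₃ β₄ β₅ β₆ f a b x =
        -Real.exp (-2 * f x) * tphi f x * diagM β₁ β₄ a b) := by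
  have hE : ∀ x : Fin 3 → ℝ, Real.exp (-2 * f x) = Real.exp (-f x) * Real.exp (-f x) := by
    intro x; rw [← Real.exp_add]; ring_nf
  have c3 : ∀ i : Fin 3, i = 0 ∨ i = 1 ∨ i = 2 := by decide
  have c4 : ∀ a : Fin 4, a = 0 ∨ a = 1 ∨ a = 2 ∨ a = 3 := by decide
  refine ⟨?_, ?_, ?_⟩
  · intro i j hij x
    have hE := hE x
    rcases c3 i with rfl|rfl|rfl <;> rcases c3 j with rfl|rfl|rfl <;>
      first
      | exact absurd rfl hij
      | (simp (config := { decide := true }) only [Lmat, B1, B2, B3, Bscalar, etaM, epsM,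
          Fin.sum_univ_four, succ0, succ1, succ2, Bob_last_zero,
          Bob_eval1 hf, Bob_eval2 hf, Bob_eval3 hf, phiI0, phiI1, phiI2, phiI3, tphi, diagM,
          Fin.sum_univ_three, hE, phiM_symm hf 0 1 x, phiM_symm hf 0 2 x, phiM_symm hf 1 2 x,
          if_true, if_false]
         ring)
  · intro i x
    have hE := hE x
    constructor <;> rcases c3 i with rfl|rfl|rfl <;>
      (simp (config := { decide := true }) only [Lmat, B1, B2, B3, Bscalar, etaM, epsM,
        Fin.sum_univ_four, succ0, succ1, succ2, Bob_last_zero,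
        Bob_eval1 hf, Bob_eval2 hf, Bob_eval3 hf, phiI0, phiI1, phiI2, phiI3, tphi, diagM,
        Fin.sum_univ_three, hE, phiM_symm hf 0 1 x, phiM_symm hf 0 2 x, phiM_symm hf 1 2 x,
        if_true, if_false]
       ring)
  · intro h12 a b x
    subst h12
    have hE := hE x
    rcases c4 a with rfl|rfl|rfl|rfl <;> rcases c4 b with rfl|rfl|rfl|rfl <;>
      (simp (config := { decide := true }) only [Lmat, B1, B2, B3, Bscalar, etaM, epsM,
        Fin.sum_univ_four, succ0, succ1, succ2, Bob_last_zero,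
        Bob_eval1 hf, Bob_eval2 hf, Bob_eval3 hf, phiI0, phiI1, phiI2, phiI3, tphi, diagM,
        Fin.sum_univ_three, hE, phiM_symm hf 0 1 x, phiM_symm hf 0 2 x, phiM_symm hf 1 2 x,
        if_true, if_false]
       ring)
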